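/- The number of conjugacy classes of cyclic subgroups of S_n equals p(n), the number of partitions of n. -/

import Mathlib

/-- Two subgroups are conjugate if one is the image of the other under conjugation. -/
def subgroupConjRel {G : Type*} [Group G]
    (H K : {H : Subgroup G // ∃ x, H = Subgroup.zpowers x}) : Prop :=
  ∃ g : G, K.1 = Subgroup.map (MulAut.conj g).toMonoidHom H.1

open Equiv Equiv.Perm Subgroup

section Aux

variable {α : Type*} [Fintype α] [DecidableEq α]

lemma cycleType_pow_coprime (σ : Perm α) :
    ∀ m : ℕ, Nat.Coprime m (orderOf σ) → (σ ^ m).cycleType = σ.cycleType := by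
  induction σ using Equiv.Perm.cycle_induction_on with
  | base_one => simp
  | base_cycles c hc =>
      intro m hm
      rw [(hc.pow_iff.mpr hm).cycleType, hc.cycleType, support_pow_coprime hm]
  | induction_disjoint σ τ hd hc hσ hτ =>
      intro m hm
      rw [hd.orderOf] at hm
      have hmσ : Nat.Coprime m (orderOf σ) :=
        Nat.Coprime.coprime_dvd_right (Nat.dvd_lcm_left _ _) hm
      have hmτ : Nat.Coprime m (orderOf τ) :=
        Nat.Coprime.coprime_dvd_right (Nat.dvd_lcm_right _ _) hm
      rw [hd.commute.mul_pow, Equiv.Perm.Disjoint.cycleType_mul (hd.pow_disjoint_pow m m), hd.cycleType_mul,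
        hσ m hmσ, hτ m hmτ]

lemma isConj_of_zpowers_eq {x y : Perm α} (h : zpowers x = zpowers y) : IsConj x y := by
  have hy : y ∈ Submonoid.powers x := by
    rw [mem_powers_iff_mem_zpowers, h]
    exact mem_zpowers y
  obtain ⟨m, hm'⟩ := hy
  have hm : x ^ m = y := hm'
  have ho : orderOf x = orderOf y := by
    rw [← Nat.card_zpowers, ← Nat.card_zpowers, h]
  have hcop : Nat.Coprime m (orderOf x) := by
    have h1 : orderOf (x ^ m) = orderOf x := by rw [hm, ho]
    rw [orderOf_pow] at h1
    have hpos : 0 < orderOf x := orderOf_pos x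
    have hdvd : Nat.gcd (orderOf x) m ∣ orderOf x := Nat.gcd_dvd_left _ _
    have : orderOf x / Nat.gcd (orderOf x) m * Nat.gcd (orderOf x) m = orderOf x :=
      Nat.div_mul_cancel hdvd
    rw [h1] at this
    have hg1 : Nat.gcd (orderOf x) m = 1 := by
      nlinarith [Nat.le_of_dvd hpos hdvd]
    exact Nat.Coprime.symm hg1
  rw [isConj_iff_cycleType_eq, ← hm, cycleType_pow_coprime x m hcop]

end Aux

/-- The number of conjugacy classes of cyclic subgroups of `S_n` equals the number of
partitions of `n`. -/
theorem card_conj_cyclic_subgroups_perm (n : ℕ) :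
    Nat.card (Quot (subgroupConjRel (G := Equiv.Perm (Fin n)))) =
      Nat.card (Nat.Partition n) := by
  classical
  set G := Equiv.Perm (Fin n)
  -- Step 1: Quot subgroupConjRel ≃ ConjClasses G
  have e1 : Nat.card (Quot (subgroupConjRel (G := G))) = Nat.card (ConjClasses G) := by
    refine Nat.card_congr (Equiv.symm ?_)
    refine Equiv.ofBijective
      (Quotient.lift (fun x : G => Quot.mk _ (⟨zpowers x, x, rfl⟩ :
          {H : Subgroup G // ∃ x, H = Subgroup.zpowers x})) ?_) ⟨?_, ?_⟩
    · intro a b hab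
      obtain ⟨g, hg⟩ := isConj_iff.mp hab
      apply Quot.sound
      exact ⟨g, by simp only [MonoidHom.map_zpowers]; simp [MulAut.conj_apply, hg]⟩
    · intro a b hab
      induction a using Quotient.ind
      induction b using Quotient.ind
      rename_i x y
      simp only [Quotient.lift_mk] at hab
      have key : ∀ (u v : {H : Subgroup G // ∃ x, H = Subgroup.zpowers x}),
          subgroupConjRel u v → (∀ x y : G, u.1 = zpowers x → v.1 = zpowers y → IsConj x y) := by
        rintro ⟨U, hU⟩ ⟨V, hV⟩ ⟨g, hg⟩ x y hx hy
        simp only at hg hx hy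
        rw [hx, hy, MonoidHom.map_zpowers] at hg
        have h1 : IsConj x ((MulEquiv.toMonoidHom (MulAut.conj g)) x) := isConj_iff.mpr ⟨g, rfl⟩
        exact h1.trans (isConj_of_zpowers_eq hg.symm)
      -- extract relation from Quot.mk equality via a lifted invariant
      have : ConjClasses.mk x = ConjClasses.mk y := by
        have hwd : ∀ (u v : {H : Subgroup G // ∃ x, H = Subgroup.zpowers x}),
            subgroupConjRel u v →
            ConjClasses.mk u.2.choose = ConjClasses.mk v.2.choose := by
          intro u v huv
          rw [ConjClasses.mk_eq_mk_iff_isConj]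
          exact key u v huv _ _ u.2.choose_spec v.2.choose_spec
        have := congrArg (Quot.lift
          (fun H : {H : Subgroup G // ∃ x, H = Subgroup.zpowers x} =>
            ConjClasses.mk H.2.choose) hwd) hab
        simp only [Quot.lift_mk] at this
        calc ConjClasses.mk x
            = ConjClasses.mk (⟨zpowers x, x, rfl⟩ :
                {H : Subgroup G // ∃ x, H = Subgroup.zpowers x}).2.choose := by
              rw [ConjClasses.mk_eq_mk_iff_isConj]
              exact isConj_of_zpowers_eq
                (⟨zpowers x, x, rfl⟩ :
                  {H : Subgroup G // ∃ x, H = Subgroup.zpowers x}).2.choose_spec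
          _ = ConjClasses.mk (⟨zpowers y, y, rfl⟩ :
                {H : Subgroup G // ∃ x, H = Subgroup.zpowers x}).2.choose := this
          _ = ConjClasses.mk y := by
              rw [ConjClasses.mk_eq_mk_iff_isConj]
              exact (isConj_of_zpowers_eq
                (⟨zpowers y, y, rfl⟩ :
                  {H : Subgroup G // ∃ x, H = Subgroup.zpowers x}).2.choose_spec).symm
      exact this
    · rintro ⟨⟨H, x, hx⟩⟩
      exact ⟨Quotient.mk _ x, by simp only [Quotient.lift_mk]; congr 1; exact Subtype.ext hx.symm⟩
  -- Step 2: ConjClasses G ↔ partitions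
  have e2 : Nat.card (ConjClasses G) = Nat.card ((Fintype.card (Fin n)).Partition) := by
    refine Nat.card_congr (Equiv.ofBijective
      (Quotient.lift (fun σ : G => σ.partition)
        (fun a b hab => partition_eq_of_isConj.mp hab)) ⟨?_, ?_⟩)
    · intro a b hab
      induction a using Quotient.ind
      induction b using Quotient.ind
      simp only [Quotient.lift_mk] at hab
      exact Quotient.sound (partition_eq_of_isConj.mpr hab)
    · intro p
      set m : Multiset ℕ := p.parts.filter (fun a => 2 ≤ a) with hm
      have hsplit : p.parts = m + p.parts.filter (fun a => ¬ 2 ≤ a) := by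
        rw [hm, Multiset.filter_add_not]
      have hsum : m.sum ≤ Fintype.card (Fin n) := by
        have := p.parts_sum
        rw [hsplit, Multiset.sum_add] at this
        omega
      have h2 : ∀ a ∈ m, 2 ≤ a := fun a ha => (Multiset.mem_filter.mp ha).2
      obtain ⟨σ, hσ⟩ := (Equiv.Perm.exists_with_cycleType_iff (Fin n)).mpr ⟨hsum, h2⟩
      refine ⟨Quotient.mk _ σ, ?_⟩
      simp only [Quotient.lift_mk]
      ext1
      rw [parts_partition, hσ]
      have hones : p.parts.filter (fun a => ¬ 2 ≤ a) =
          Multiset.replicate (Multiset.card (p.parts.filter (fun a => ¬ 2 ≤ a))) 1 := by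
        rw [Multiset.eq_replicate_card]
        intro b hb
        have hb2 := (Multiset.mem_filter.mp hb).2
        have hb1 := p.parts_pos (Multiset.mem_filter.mp hb).1
        omega
      have hcard : Multiset.card (p.parts.filter (fun a => ¬ 2 ≤ a)) =
          Fintype.card (Fin n) - σ.support.card := by
        have h1 : m.sum + (p.parts.filter (fun a => ¬ 2 ≤ a)).sum = Fintype.card (Fin n) := by
          rw [← Multiset.sum_add, ← hsplit, p.parts_sum]
        have h2' : (p.parts.filter (fun a => ¬ 2 ≤ a)).sum =
            Multiset.card (p.parts.filter (fun a => ¬ 2 ≤ a)) := by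
          conv_lhs => rw [hones]
          simp
        have h3 : σ.support.card = m.sum := by rw [← Equiv.Perm.sum_cycleType, hσ]
        omega
      rw [hsplit]
      congr 1
      rw [hcard] at hones
      exact hones.symm
  rw [e1, e2, Fintype.card_fin]
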